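/- There exists a continuous real-valued function on ℝ that is nowhere differentiable. -/

import Mathlib

open Metric Filter

noncomputable def TT : ℝ → ℝ := fun x => Metric.infDist x (Set.range ((↑) : ℤ → ℝ))

lemma Zne : (Set.range ((↑) : ℤ → ℝ)).Nonempty := ⟨0, 0, by norm_num⟩

lemma TT_le (x : ℝ) (m : ℤ) : TT x ≤ |x - m| := by
  simpa [TT, Real.dist_eq] using
    Metric.infDist_le_dist_of_mem (x := x) (Set.mem_range_self (f := ((↑) : ℤ → ℝ)) m)

lemma le_TT {x c : ℝ} (h : ∀ m : ℤ, c ≤ |x - m|) : c ≤ TT x := by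
  by_contra hc
  push_neg at hc
  obtain ⟨y, ⟨m, rfl⟩, hy⟩ := (Metric.infDist_lt_iff Zne).1 hc
  exact absurd (h m) (by rw [← Real.dist_eq]; exact not_le.2 hy)

lemma TT_nonneg (x : ℝ) : 0 ≤ TT x := Metric.infDist_nonneg

lemma TT_int (m : ℤ) : TT (m : ℝ) = 0 :=
  Metric.infDist_zero_of_mem (Set.mem_range_self m)

lemma TT_cont : Continuous TT := Metric.continuous_infDist_pt _

lemma TT_le_one (x : ℝ) : TT x ≤ 1 := by
  have h := TT_le x ⌊x⌋
  have h1 : |x - ⌊x⌋| ≤ 1 := by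
    rw [abs_of_nonneg (by linarith [Int.floor_le x])]
    linarith [Int.lt_floor_add_one x]
  linarith

lemma TT_even {i : ℤ} {y : ℝ} (h1 : (i : ℝ) ≤ y) (h2 : y ≤ i + 1/2) : TT y = y - i := by
  have hle := TT_le y i
  rw [abs_of_nonneg (by linarith)] at hle
  refine le_antisymm hle ?_
  refine le_TT fun m => ?_
  rcases le_or_gt (m : ℝ) i with hm | hm
  · have : (m : ℝ) ≤ i := hm
    rw [abs_of_nonneg (by linarith)]; linarith
  · have : (i : ℝ) + 1 ≤ m := by exact_mod_cast Int.add_one_le_of_lt (by exact_mod_cast hm)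
    rw [abs_of_nonpos (by linarith)]; linarith

lemma TT_odd {i : ℤ} {y : ℝ} (h1 : (i : ℝ) + 1/2 ≤ y) (h2 : y ≤ i + 1) : TT y = i + 1 - y := by
  refine le_antisymm ?_ ?_
  · have := TT_le y (i + 1)
    rw [abs_of_nonpos (by push_cast; linarith)] at this
    push_cast at this ⊢; linarith
  refine le_TT fun m => ?_
  rcases le_or_gt (m : ℝ) i with hm | hm
  · rw [abs_of_nonneg (by linarith)]; linarith
  · have : (i : ℝ) + 1 ≤ m := by exact_mod_cast Int.add_one_le_of_lt (by exact_mod_cast hm)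
    rw [abs_of_nonpos (by linarith)]; linarith

lemma TT_slope {j : ℤ} {a b : ℝ} (ha1 : (j : ℝ)/2 ≤ a) (ha2 : a ≤ (j+1)/2)
    (hb1 : (j : ℝ)/2 ≤ b) (hb2 : b ≤ (j+1)/2) :
    TT b - TT a = (-1 : ℝ)^j * (b - a) := by
  rcases Int.even_or_odd j with ⟨i, hi⟩ | ⟨i, hi⟩
  · subst hi
    have ca : TT a = a - i := TT_even (by push_cast at ha1 ⊢; linarith) (by push_cast at ha2 ⊢; linarith)
    have cb : TT b = b - i := TT_even (by push_cast at hb1 ⊢; linarith) (by push_cast at hb2 ⊢; linarith)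
    rw [ca, cb, Even.neg_one_zpow ⟨i, rfl⟩]
    ring
  · subst hi
    have ca : TT a = i + 1 - a := TT_odd (by push_cast at ha1 ⊢; linarith) (by push_cast at ha2 ⊢; linarith)
    have cb : TT b = i + 1 - b := TT_odd (by push_cast at hb1 ⊢; linarith) (by push_cast at hb2 ⊢; linarith)
    rw [ca, cb, Odd.neg_one_zpow ⟨i, rfl⟩]
    ring

noncomputable def W : ℝ → ℝ := fun x => ∑' n : ℕ, (2:ℝ)⁻¹^n * TT (2^n * x)

lemma hsum : Summable (fun n : ℕ => (2:ℝ)⁻¹^n) :=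
  summable_geometric_of_lt_one (by norm_num) (by norm_num)

lemma W_term_bound (n : ℕ) (x : ℝ) : ‖(2:ℝ)⁻¹^n * TT (2^n * x)‖ ≤ (2:ℝ)⁻¹^n := by
  rw [Real.norm_eq_abs, abs_mul, abs_of_nonneg (TT_nonneg _),
    abs_of_nonneg (by positivity)]
  nlinarith [TT_le_one (2^n * x), pow_nonneg (by norm_num : (0:ℝ) ≤ 2⁻¹) n,
    TT_nonneg (2^n * x)]

lemma W_cont : Continuous W := by
  refine continuous_tsum (fun n => ?_) hsum W_term_bound
  exact continuous_const.mul (TT_cont.comp (continuous_const.mul continuous_id))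

lemma W_summable (x : ℝ) : Summable (fun n : ℕ => (2:ℝ)⁻¹^n * TT (2^n * x)) :=
  hsum.of_norm_bounded (W_term_bound · x)

lemma W_dyadic (n : ℕ) (p : ℤ) :
    W ((p : ℝ)/2^n) = ∑ m ∈ Finset.range n, (2:ℝ)⁻¹^m * TT (2^m * ((p:ℝ)/2^n)) := by
  refine tsum_eq_sum fun b hb => ?_
  have hbn : n ≤ b := by simpa using hb
  have : (2:ℝ)^b * ((p:ℝ)/2^n) = ((p * 2^(b-n) : ℤ) : ℝ) := by
    have h2 : (2:ℝ)^(b-n) * 2^n = 2^b := by rw [← pow_add]; congr 1; omega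
    push_cast
    rw [← h2]
    field_simp
  rw [this, TT_int, mul_zero]

/-- There exists a continuous nowhere-differentiable function on ℝ. -/
theorem stmt10 : ∃ f : ℝ → ℝ, Continuous f ∧ ∀ x : ℝ, ¬ DifferentiableAt ℝ f x := by
  refine ⟨W, W_cont, fun x hd => ?_⟩
  set L := deriv W x with hL
  have hder : HasDerivAt W L x := hd.hasDerivAt
  set k : ℕ → ℤ := fun n => ⌊(2:ℝ)^n * x⌋ with hk
  set u : ℕ → ℝ := fun n => (k n : ℝ)/2^n with hu
  set v : ℕ → ℝ := fun n => ((k n : ℝ)+1)/2^n with hv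
  have hpow : ∀ n : ℕ, (0:ℝ) < 2^n := fun n => by positivity
  have hux : ∀ n, u n ≤ x := by
    intro n
    rw [hu, div_le_iff₀ (hpow n)]
    have := Int.floor_le ((2:ℝ)^n * x)
    simpa [hk, mul_comm] using this
  have hxv : ∀ n, x < v n := by
    intro n
    rw [hv, lt_div_iff₀ (hpow n)]
    have := Int.lt_floor_add_one ((2:ℝ)^n * x)
    simpa [hk, mul_comm] using this
  have vsubu : ∀ n, v n - u n = 1/2^n := by
    intro n; rw [hu, hv]; ring
  -- integer bounds
  have hj1 : ∀ m n : ℕ, m < n → k (m+1) * 2^(n-m-1) ≤ k n := by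
    intro m n hmn
    refine Int.le_floor.2 ?_
    push_cast
    have h1 : (k (m+1) : ℝ) ≤ 2^(m+1) * x := Int.floor_le _
    have hexp : (2:ℝ)^(m+1) * 2^(n-m-1) = 2^n := by
      rw [← pow_add]; congr 1; omega
    calc (k (m+1) : ℝ) * 2^(n-m-1) ≤ (2^(m+1) * x) * 2^(n-m-1) :=
          mul_le_mul_of_nonneg_right h1 (by positivity)
      _ = 2^n * x := by rw [← hexp]; ring
  have hj2 : ∀ m n : ℕ, m < n → k n + 1 ≤ (k (m+1) + 1) * 2^(n-m-1) := by
    intro m n hmn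
    have : k n < (k (m+1) + 1) * 2^(n-m-1) := by
      refine Int.floor_lt.2 ?_
      push_cast
      have h1 : (2:ℝ)^(m+1) * x < k (m+1) + 1 := Int.lt_floor_add_one _
      have hexp : (2:ℝ)^(m+1) * 2^(n-m-1) = 2^n := by
        rw [← pow_add]; congr 1; omega
      calc (2:ℝ)^n * x = (2^(m+1) * x) * 2^(n-m-1) := by rw [← hexp]; ring
        _ < ((k (m+1) : ℝ) + 1) * 2^(n-m-1) :=
          mul_lt_mul_of_pos_right h1 (by positivity)
    omega
  -- slope computation
  have Tdiff : ∀ m n : ℕ, m < n →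
      TT (2^m * v n) - TT (2^m * u n) = (-1:ℝ)^(k (m+1)) * (2^m/2^n) := by
    intro m n hmn
    have hj1R : (k (m+1) : ℝ) * 2^(n-m-1) ≤ k n := by exact_mod_cast hj1 m n hmn
    have hj2R : (k n : ℝ) + 1 ≤ ((k (m+1) : ℝ) + 1) * 2^(n-m-1) := by
      exact_mod_cast hj2 m n hmn
    have hc : (2:ℝ)^(n-m-1) * (2 * 2^m) = 2^n := by
      rw [show (2:ℝ) * 2^m = 2^(m+1) by rw [pow_succ]; ring, ← pow_add]
      congr 1; omega
    have hab : 2^m * u n ≤ 2^m * v n := by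
      have : u n ≤ v n := by linarith [hux n, hxv n]
      nlinarith [hpow m]
    have ha1 : (k (m+1) : ℝ)/2 ≤ 2^m * u n := by
      rw [hu, show (2:ℝ)^m * ((k n : ℝ)/2^n) = (k n : ℝ) * 2^m / 2^n by ring,
        div_le_div_iff₀ two_pos (hpow n), ← hc]
      nlinarith [mul_le_mul_of_nonneg_right hj1R (show (0:ℝ) ≤ 2 * 2^m by positivity)]
    have hb2 : 2^m * v n ≤ ((k (m+1) : ℝ) + 1)/2 := by
      rw [hv, show (2:ℝ)^m * (((k n : ℝ)+1)/2^n) = ((k n : ℝ)+1) * 2^m / 2^n by ring,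
        div_le_div_iff₀ (hpow n) two_pos, ← hc]
      nlinarith [mul_le_mul_of_nonneg_right hj2R (show (0:ℝ) ≤ 2 * 2^m by positivity)]
    have h := TT_slope (j := k (m+1)) (a := 2^m * u n) (b := 2^m * v n)
      ha1 (le_trans hab hb2) (le_trans ha1 hab) hb2
    rw [h]
    have : (2:ℝ)^m * v n - 2^m * u n = 2^m/2^n := by
      rw [show (2:ℝ)^m * v n - 2^m * u n = 2^m * (v n - u n) by ring, vsubu n]; ring
    rw [this]
  -- the quotient sequence
  set Q : ℕ → ℝ := fun n => ∑ m ∈ Finset.range n, (-1:ℝ)^(k (m+1)) with hQdef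
  have hQ : ∀ n, W (v n) - W (u n) = Q n / 2^n := by
    intro n
    have e1 : W (v n) = ∑ m ∈ Finset.range n, (2:ℝ)⁻¹^m * TT (2^m * v n) := by
      have : v n = (((k n + 1 : ℤ)) : ℝ)/2^n := by rw [hv]; push_cast; ring
      rw [this, W_dyadic n (k n + 1)]
    have e2 : W (u n) = ∑ m ∈ Finset.range n, (2:ℝ)⁻¹^m * TT (2^m * u n) := by
      rw [hu, W_dyadic n (k n)]
    rw [e1, e2, ← Finset.sum_sub_distrib, hQdef, Finset.sum_div]
    refine Finset.sum_congr rfl fun m hm => ?_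
    have hmn : m < n := Finset.mem_range.1 hm
    rw [← mul_sub, Tdiff m n hmn]
    have h1 : (2:ℝ)⁻¹^m * 2^m = 1 := by
      rw [← mul_pow]; norm_num
    field_simp
    rw [← mul_pow]; norm_num
  -- Q n tends to L
  have hQL : Filter.Tendsto Q Filter.atTop (nhds L) := by
    rw [Metric.tendsto_atTop]
    intro ε hε
    have hlo := (hasDerivAt_iff_isLittleO.1 hder).def (show (0:ℝ) < ε/4 by linarith)
    rw [Metric.eventually_nhds_iff] at hlo
    obtain ⟨δ, hδ, hball⟩ := hlo
    obtain ⟨N, hN⟩ := exists_pow_lt_of_lt_one hδ (show (1:ℝ)/2 < 1 by norm_num)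
    refine ⟨N, fun n hn => ?_⟩
    have hdist : ∀ y : ℝ, |y - x| ≤ 1/2^n → |W y - W x - (y - x) * L| ≤ ε/4 * |y - x| := by
      intro y hy
      have hyd : dist y x < δ := by
        rw [Real.dist_eq]
        calc |y - x| ≤ 1/2^n := hy
          _ ≤ (1/2)^N := by
              rw [div_pow, one_pow]
              exact div_le_div_of_nonneg_left one_pos.le (hpow N)
                (pow_le_pow_right₀ one_le_two hn)
          _ < δ := hN
      have := hball hyd
      simpa [Real.norm_eq_abs, smul_eq_mul] using this
    have hvx : |v n - x| ≤ 1/2^n := by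
      rw [abs_of_nonneg (by linarith [hxv n])]
      linarith [hux n, vsubu n]
    have hux' : |u n - x| ≤ 1/2^n := by
      rw [abs_of_nonpos (by linarith [hux n])]
      linarith [hxv n, vsubu n]
    have h1 := hdist (v n) hvx
    have h2 := hdist (u n) hux'
    have h1' : |W (v n) - W x - (v n - x) * L| ≤ ε/4 * (1/2^n) :=
      h1.trans (mul_le_mul_of_nonneg_left hvx (by linarith))
    have h2' : |W (u n) - W x - (u n - x) * L| ≤ ε/4 * (1/2^n) :=
      h2.trans (mul_le_mul_of_nonneg_left hux' (by linarith))
    have hQn : Q n = (W (v n) - W (u n)) * 2^n := by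
      rw [hQ n]; field_simp
    have hone : (2:ℝ)^n * (v n - u n) = 1 := by
      rw [vsubu n]; field_simp
    have tri : ∀ A B : ℝ, |A - B| ≤ |A| + |B| := fun A B => by
      simpa [sub_eq_add_neg] using abs_add_le A (-B)
    rw [Real.dist_eq]
    calc |Q n - L|
        = |2^n * ((W (v n) - W x - (v n - x) * L) - (W (u n) - W x - (u n - x) * L))| := by
          rw [hQn]; congr 1; linear_combination L * hone
      _ = 2^n * |(W (v n) - W x - (v n - x) * L) - (W (u n) - W x - (u n - x) * L)| := by
          rw [abs_mul, abs_of_nonneg (hpow n).le]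
      _ ≤ 2^n * (ε/4 * (1/2^n) + ε/4 * (1/2^n)) := by
          have := (tri (W (v n) - W x - (v n - x) * L) (W (u n) - W x - (u n - x) * L)).trans
            (add_le_add h1' h2')
          nlinarith [hpow n]
      _ = ε/2 := by field_simp; ring
      _ < ε := by linarith
  -- contradiction: consecutive differences of Q have absolute value 1
  have hQ1 : Filter.Tendsto (fun n => Q (n+1) - Q n) Filter.atTop (nhds (L - L)) :=
    (hQL.comp (Filter.tendsto_add_atTop_nat 1)).sub hQL
  rw [sub_self] at hQ1
  have habs : ∀ n : ℕ, |Q (n+1) - Q n| = 1 := by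
    intro n
    have : Q (n+1) - Q n = (-1:ℝ)^(k (n+1)) := by
      simp [hQdef, Finset.sum_range_succ]
    rw [this]
    rcases Int.even_or_odd (k (n+1)) with he | ho
    · rw [he.neg_one_zpow, abs_one]
    · rw [ho.neg_one_zpow, abs_neg, abs_one]
  obtain ⟨N, hN⟩ := (Metric.tendsto_atTop.1 hQ1) 1 one_pos
  have := hN N le_rfl
  rw [Real.dist_eq, sub_zero, habs N] at this
  exact lt_irrefl _ this
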